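/- For the binomial distribution with parameters n and p = 1/4 (n divisible by 4), the mean absolute deviation satisfies: the sum over k from 0 to n of C(n,k)(1/4)^k(3/4)^{n-k}|k - n/4| equals (3n/8) * C(n, n/4) * (1/4)^{n/4} * (3/4)^{3n/4}. -/

import Mathlib

/-- De Moivre mean absolute deviation formula for the binomial distribution
B(n, 1/4) with n divisible by 4. -/
theorem binomial_mean_deviation_quarter (n : ℕ) (hn : 0 < n) (h4 : 4 ∣ n) :
    ∑ k ∈ Finset.range (n + 1),
      (n.choose k : ℝ) * (1/4)^k * (3/4)^(n - k) * |(k : ℝ) - (n : ℝ)/4|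
    = (3 * (n : ℝ) / 8) * (n.choose (n/4) : ℝ) * (1/4)^(n/4) * (3/4)^(3*n/4) := by
  obtain ⟨m, hm⟩ := h4
  have hm1 : 1 ≤ m := by omega
  set A : ℕ → ℝ := fun k =>
    (k:ℝ) * (3/4) * ((n.choose k : ℝ) * (1/4)^k * (3/4)^(n-k)) with hA
  have key : ∀ k, A k - A (k+1)
      = ((k:ℝ) - (n:ℝ)/4) * ((n.choose k : ℝ) * (1/4)^k * (3/4)^(n-k)) := by
    intro k
    rcases lt_trichotomy k n with hk | hk | hk
    · have h1 : n - k = (n - (k+1)) + 1 := by omega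
      have h2 : ((n.choose (k+1) : ℝ)) * ((k:ℝ)+1) = (n.choose k : ℝ) * ((n:ℝ) - k) := by
        have h3 := Nat.choose_succ_right_eq n k
        have h5 : ((n.choose (k+1)):ℝ) * ((k:ℝ)+1)
            = (n.choose k : ℝ) * ((n - k : ℕ):ℝ) := by exact_mod_cast h3
        rw [Nat.cast_sub hk.le] at h5
        exact h5
      simp only [hA]
      rw [h1, pow_succ]
      push_cast
      linear_combination (-(3/16) * (1/4:ℝ)^k * (3/4:ℝ)^(n-(k+1))) * h2
    · subst hk
      simp only [hA, Nat.choose_self, Nat.choose_succ_self_right]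
      have : k.choose (k+1) = 0 := Nat.choose_succ_self k
      rw [this]
      have : k - k = 0 := by omega
      rw [this]
      push_cast
      ring
    · have c1 : n.choose k = 0 := Nat.choose_eq_zero_of_lt hk
      have c2 : n.choose (k+1) = 0 := Nat.choose_eq_zero_of_lt (by omega)
      simp [hA, c1, c2]
  have hstep : ∀ k ∈ Finset.range (n+1),
      (n.choose k : ℝ) * (1/4)^k * (3/4)^(n - k) * |(k : ℝ) - (n : ℝ)/4|
      = (A k - A (k+1)) + (if k ≤ m then 2*(A (k+1) - A k) else 0) := by
    intro k _
    by_cases hk : k ≤ m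
    · rw [if_pos hk]
      have habs : |(k:ℝ) - (n:ℝ)/4| = (n:ℝ)/4 - k := by
        rw [abs_sub_comm, abs_of_nonneg]
        subst hm
        push_cast
        have : (k:ℝ) ≤ m := by exact_mod_cast hk
        linarith
      rw [habs]
      linear_combination key k
    · rw [if_neg hk, add_zero]
      have habs : |(k:ℝ) - (n:ℝ)/4| = (k:ℝ) - (n:ℝ)/4 := by
        rw [abs_of_nonneg]
        subst hm
        push_cast
        have : (m:ℝ) + 1 ≤ k := by exact_mod_cast Nat.succ_le_of_lt (Nat.lt_of_not_le hk)
        linarith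
      rw [habs]
      linear_combination -key k
  rw [Finset.sum_congr rfl hstep, Finset.sum_add_distrib]
  have t1 : ∑ k ∈ Finset.range (n+1), (A k - A (k+1)) = A 0 - A (n+1) :=
    Finset.sum_range_sub' A (n+1)
  have t2 : ∑ k ∈ Finset.range (n+1), (if k ≤ m then 2*(A (k+1) - A k) else 0)
      = ∑ k ∈ Finset.range (m+1), (if k ≤ m then 2*(A (k+1) - A k) else 0) := by
    refine (Finset.sum_subset (Finset.range_subset_range.mpr (by omega)) ?_).symm
    intro x _ hx
    have hxm : ¬ x ≤ m := fun h => hx (Finset.mem_range.mpr (Nat.lt_succ_of_le h))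
    rw [if_neg hxm]
  have t3 : ∑ k ∈ Finset.range (m+1), (if k ≤ m then 2*(A (k+1) - A k) else 0)
      = 2 * (A (m+1) - A 0) := by
    rw [Finset.sum_congr rfl (fun k hk => if_pos (by
      simpa using Nat.lt_succ_iff.mp (Finset.mem_range.mp hk)))]
    rw [← Finset.mul_sum, Finset.sum_range_sub A (m+1)]
  rw [t1, t2, t3]
  have hA0 : A 0 = 0 := by simp [hA]
  have hAn : A (n+1) = 0 := by simp [hA, Nat.choose_succ_self]
  rw [hA0, hAn]
  -- now goal: 0 - 0 + 2 * (A (m+1) - 0) = RHS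
  have hdiv : n / 4 = m := by omega
  have hdiv3 : 3 * n / 4 = 3 * m := by omega
  rw [hdiv, hdiv3]
  have hnm : n - (m+1) = 3*m - 1 := by omega
  have hpow : (3/4:ℝ)^(3*m) = (3/4:ℝ)^(3*m-1) * (3/4) := by
    rw [← pow_succ]
    congr 1
    omega
  have hch : ((n.choose (m+1) : ℝ)) * ((m:ℝ)+1) = (n.choose m : ℝ) * (3*(m:ℝ)) := by
    have h3 := Nat.choose_succ_right_eq n m
    have : n - m = 3*m := by omega
    rw [this] at h3
    exact_mod_cast congrArg (Nat.cast (R := ℝ)) h3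
  simp only [hA, hnm]
  have hn4 : (n:ℝ) = 4*m := by exact_mod_cast hm
  rw [hn4, hpow]
  push_cast
  linear_combination ((3/2) * (1/4:ℝ)^(m+1) * (3/4:ℝ)^(3*m-1)) * hch
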